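/- Let r_i denote the i-th smallest prime greater than 3. For every integer t ≥ 20, the product r₇·r₈·⋯·r_t is strictly greater than (12·(t+3)·2^(t-3) - 7)³. -/

import Mathlib

/-- `r i` is the `i`-th smallest prime greater than 3 (so `r 1 = 5`, `r 2 = 7`, ...). -/
noncomputable def r (i : ℕ) : ℕ := Nat.nth (fun q => Nat.Prime q ∧ 3 < q) (i - 1)

lemma p_infinite : {q | Nat.Prime q ∧ 3 < q}.Infinite := by
  have h := Nat.infinite_setOf_prime
  have h2 : {q | Nat.Prime q} \ Set.Iic 3 ⊆ {q | Nat.Prime q ∧ 3 < q} := by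
    intro q hq
    exact ⟨hq.1, by simpa using hq.2⟩
  exact ((h.diff (Set.finite_Iic 3)).mono h2)

lemma r_eq (n v : ℕ) (hv : Nat.Prime v ∧ 3 < v)
    (hc : Nat.count (fun q => Nat.Prime q ∧ 3 < q) v = n) : r (n + 1) = v := by
  unfold r
  simp only [Nat.add_sub_cancel]
  rw [← hc]
  exact Nat.nth_count hv

lemma r_7 : r 7 = 23 := r_eq 6 23 (by norm_num) (by decide)
lemma r_8 : r 8 = 29 := r_eq 7 29 (by norm_num) (by decide)
lemma r_9 : r 9 = 31 := r_eq 8 31 (by norm_num) (by decide)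
lemma r_10 : r 10 = 37 := r_eq 9 37 (by norm_num) (by decide)
lemma r_11 : r 11 = 41 := r_eq 10 41 (by norm_num) (by decide)
lemma r_12 : r 12 = 43 := r_eq 11 43 (by norm_num) (by decide)
lemma r_13 : r 13 = 47 := r_eq 12 47 (by norm_num) (by decide)
lemma r_14 : r 14 = 53 := r_eq 13 53 (by norm_num) (by decide)
lemma r_15 : r 15 = 59 := r_eq 14 59 (by norm_num) (by decide)
lemma r_16 : r 16 = 61 := r_eq 15 61 (by norm_num) (by decide)
lemma r_17 : r 17 = 67 := r_eq 16 67 (by norm_num) (by decide)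
lemma r_18 : r 18 = 71 := r_eq 17 71 (by norm_num) (by decide)
lemma r_19 : r 19 = 73 := r_eq 18 73 (by norm_num) (by decide)
lemma r_20 : r 20 = 79 := r_eq 19 79 (by norm_num) (by decide)
lemma r_21 : r 21 = 83 := r_eq 20 83 (by norm_num) (by decide)

lemma r_pos (i : ℕ) : 0 < r i :=
  ((Nat.nth_mem_of_infinite p_infinite (i - 1)).1).pos

lemma r_ge (t : ℕ) (ht : 20 ≤ t) : 83 ≤ r (t + 1) := by
  have h : r 21 ≤ r (t + 1) := by
    unfold r
    exact (Nat.nth_le_nth p_infinite).2 (by omega)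
  rw [r_21] at h
  exact h

lemma base_prod : ∏ i ∈ Finset.Icc 7 20, r i = 331726556966322934846277 := by
  have e : Finset.Icc 7 20 =
      ({7, 8, 9, 10, 11, 12, 13, 14, 15, 16, 17, 18, 19, 20} : Finset ℕ) := rfl
  rw [e]
  rw [show (331726556966322934846277 : ℕ) =
    23 * (29 * (31 * (37 * (41 * (43 * (47 * (53 * (59 * (61 * (67 * (71 * (73 * 79))))))))))))
    by norm_num]
  simp [Finset.prod_insert, r_7, r_8, r_9, r_10, r_11, r_12, r_13, r_14, r_15, r_16,
    r_17, r_18, r_19, r_20]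

theorem stmt_9 (t : ℕ) (ht : 20 ≤ t) :
    (12 * ((t + 3) * 2 ^ (t - 3)) - 7) ^ 3 < ∏ i ∈ Finset.Icc 7 t, r i := by
  induction t, ht using Nat.le_induction with
  | base =>
      rw [base_prod]
      norm_num
  | succ t ht ih =>
      have hP : 0 < ∏ i ∈ Finset.Icc 7 t, r i := Finset.prod_pos fun i _ => r_pos i
      have hprod : ∏ i ∈ Finset.Icc 7 (t + 1), r i =
          (∏ i ∈ Finset.Icc 7 t, r i) * r (t + 1) :=
        Finset.prod_Icc_succ_top (by omega) r
      have hr : 83 ≤ r (t + 1) := r_ge t ht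
      -- key growth inequality
      have hkey : 12 * ((t + 1 + 3) * 2 ^ (t + 1 - 3)) - 7 ≤
          3 * (12 * ((t + 3) * 2 ^ (t - 3)) - 7) := by
        obtain ⟨k, rfl⟩ : ∃ k, t = k + 3 := ⟨t - 3, by omega⟩
        have e1 : k + 3 + 1 - 3 = k + 1 := by omega
        have e2 : k + 3 - 3 = k := by omega
        rw [e1, e2, pow_succ]
        have hx : 1 ≤ 2 ^ k := Nat.one_le_two_pow
        have h1 : (k + 3 + 1 + 3) * (2 ^ k * 2) = k * 2 ^ k * 2 + 14 * 2 ^ k := by ring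
        have h2 : (k + 3 + 3) * 2 ^ k = k * 2 ^ k + 6 * 2 ^ k := by ring
        rw [h1, h2]
        omega
      calc (12 * ((t + 1 + 3) * 2 ^ (t + 1 - 3)) - 7) ^ 3
          ≤ (3 * (12 * ((t + 3) * 2 ^ (t - 3)) - 7)) ^ 3 :=
            Nat.pow_le_pow_left hkey 3
        _ = 27 * (12 * ((t + 3) * 2 ^ (t - 3)) - 7) ^ 3 := by ring
        _ < 27 * ∏ i ∈ Finset.Icc 7 t, r i := by
            exact (Nat.mul_lt_mul_left (by norm_num)).2 ih
        _ ≤ (∏ i ∈ Finset.Icc 7 t, r i) * r (t + 1) := by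
            rw [mul_comm]
            exact Nat.mul_le_mul_left _ (by omega)
        _ = ∏ i ∈ Finset.Icc 7 (t + 1), r i := hprod.symm
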